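/- arXiv:2408.13346 — 2 statements merged into one kernel-verified Lean document; each statement's English description precedes it below -/
import Mathlib

section
/- For every integer n > 0, e_2Q(n) = (1/2) ( n^2 * Q(n) - Σ_{k=1}^{n} σ_{2,odd}(k) * Q(n-k) ). -/
open Finset

/-- The finset of partitions of `n` into odd parts. -/
def oddPartitions (n : ℕ) : Finset (Nat.Partition n) :=
  Finset.univ.filter fun π => ∀ i ∈ π.parts, Odd i

/-- `Q(n)`, the number of partitions of `n` into odd parts. -/
def Qodd (n : ℕ) : ℕ := (oddPartitions n).card

/-- `e_j Q(n)`, the sum of the `j`-th elementary symmetric polynomial evaluated at the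
parts over all partitions of `n` into odd parts. -/
def ejQ (j n : ℕ) : ℕ := ∑ π ∈ oddPartitions n, π.parts.esymm j

/-- `σ_{j,odd}(n)`, the sum of `d^j` over the odd divisors `d` of `n`. -/
def sigmaOdd (j n : ℕ) : ℕ := ∑ d ∈ n.divisors.filter Odd, d ^ j


lemma esymm_one_nat (s : Multiset ℕ) : s.esymm 1 = s.sum := by
  rw [Multiset.esymm, Multiset.powersetCard_one, Multiset.map_map]
  simp

lemma esymm_two_cons (a : ℕ) (s : Multiset ℕ) :
    (a ::ₘ s).esymm 2 = s.esymm 2 + a * s.sum := by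
  rw [Multiset.esymm, Multiset.powersetCard_cons, Multiset.map_add, Multiset.sum_add,
    Multiset.map_map]
  congr 1
  rw [show Multiset.prod ∘ Multiset.cons a = fun t => a * t.prod by
    ext t; simp [Multiset.prod_cons]]
  rw [Multiset.powersetCard_one, Multiset.map_map]
  rw [show ((fun t : Multiset ℕ => a * t.prod) ∘ singleton) = fun x => a * id x by
    ext x; simp, Multiset.sum_map_mul_left]
  simp

lemma sq_sum_eq (s : Multiset ℕ) :
    s.sum ^ 2 = (s.map (· ^ 2)).sum + 2 * s.esymm 2 := by
  induction s using Multiset.induction with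
  | empty => simp [Multiset.esymm, Multiset.powersetCard_eq_empty 2 (by simp : Multiset.card (0 : Multiset ℕ) < 2)]
  | cons a s ih =>
    rw [Multiset.sum_cons, esymm_two_cons, Multiset.map_cons, Multiset.sum_cons]
    ring_nf
    ring_nf at ih
    omega

lemma mem_oddPartitions {n : ℕ} {π : Nat.Partition n} :
    π ∈ oddPartitions n ↔ ∀ i ∈ π.parts, Odd i := by
  simp [oddPartitions]

lemma card_filter_count (n d m : ℕ) (hd : Odd d) (hm : 1 ≤ m) (hdm : d * m ≤ n) :
    ((oddPartitions n).filter fun π => m ≤ π.parts.count d).card = Qodd (n - d * m) := by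
  have hd1 : 0 < d := hd.pos
  refine Finset.card_bij'
    (i := fun π hπ => (⟨π.parts - Multiset.replicate m d,
      fun {i} hi => π.parts_pos (Multiset.mem_of_le (tsub_le_self) hi),
      by
        have hle : Multiset.replicate m d ≤ π.parts := by
          rw [← Multiset.le_count_iff_replicate_le]
          exact (Finset.mem_filter.mp hπ).2
        have := tsub_add_cancel_of_le hle
        have hsum : (π.parts - Multiset.replicate m d).sum + (Multiset.replicate m d).sum
            = π.parts.sum := by rw [← Multiset.sum_add, this]
        rw [Multiset.sum_replicate, smul_eq_mul, π.parts_sum] at hsum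
        have : m * d = d * m := mul_comm m d
        omega⟩ : Nat.Partition (n - d * m)))
    (j := fun μ hμ => (⟨μ.parts + Multiset.replicate m d,
      fun {i} hi => by
        rcases Multiset.mem_add.mp hi with h | h
        · exact μ.parts_pos h
        · rw [Multiset.eq_of_mem_replicate h]; exact hd1,
      by
        rw [Multiset.sum_add, Multiset.sum_replicate, smul_eq_mul, μ.parts_sum]
        have : m * d = d * m := mul_comm m d
        omega⟩ : Nat.Partition n)) ?hi ?hj ?li ?ri
  case hi =>
    intro π hπ
    rw [Finset.mem_filter] at hπ
    rw [mem_oddPartitions]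
    intro i hi
    exact (mem_oddPartitions.mp hπ.1) i (Multiset.mem_of_le tsub_le_self hi)
  case hj =>
    intro μ hμ
    rw [Finset.mem_filter, mem_oddPartitions]
    refine ⟨?_, ?_⟩
    · intro i hi
      rcases Multiset.mem_add.mp hi with h | h
      · exact (mem_oddPartitions.mp hμ) i h
      · rw [Multiset.eq_of_mem_replicate h]; exact hd
    · rw [Multiset.count_add, Multiset.count_replicate_self]
      omega
  case li =>
    intro π hπ
    ext1
    dsimp only
    have hle : Multiset.replicate m d ≤ π.parts := by
      rw [← Multiset.le_count_iff_replicate_le]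
      exact (Finset.mem_filter.mp hπ).2
    exact tsub_add_cancel_of_le hle
  case ri =>
    intro μ hμ
    ext1
    dsimp only
    exact add_tsub_cancel_right _ _

lemma msum_le {s t : Multiset ℕ} (h : s ≤ t) : s.sum ≤ t.sum := by
  have h2 := tsub_add_cancel_of_le h
  calc s.sum ≤ (t - s).sum + s.sum := Nat.le_add_left _ _
    _ = t.sum := by rw [← Multiset.sum_add, h2]

lemma count_mul_le (n d : ℕ) (π : Nat.Partition n) : π.parts.count d * d ≤ n := by
  have h : Multiset.replicate (π.parts.count d) d ≤ π.parts := by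
    rw [← Multiset.le_count_iff_replicate_le]
  have := msum_le h
  rwa [Multiset.sum_replicate, smul_eq_mul, π.parts_sum] at this

lemma card_filter_count' (n d m : ℕ) (hd1 : 1 ≤ d) (hm : 1 ≤ m) :
    ((oddPartitions n).filter fun π => m ≤ π.parts.count d).card
      = if Odd d ∧ d * m ≤ n then Qodd (n - d * m) else 0 := by
  split_ifs with h
  · exact card_filter_count n d m h.1 hm h.2
  · rw [Finset.card_eq_zero, Finset.filter_eq_empty_iff]
    intro π hπ
    simp only [not_le]
    by_contra hc
    push_neg at hc
    have hdpos : 0 < π.parts.count d := lt_of_lt_of_le hm hc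
    have hmem : d ∈ π.parts := Multiset.count_pos.mp hdpos
    have hodd : Odd d := (mem_oddPartitions.mp hπ) d hmem
    have hle : Multiset.replicate m d ≤ π.parts :=
      Multiset.le_count_iff_replicate_le.mp hc
    have := msum_le hle
    rw [Multiset.sum_replicate, smul_eq_mul, π.parts_sum] at this
    have hcomm : m * d = d * m := mul_comm m d
    exact h ⟨hodd, by omega⟩

lemma sumsq_eq (n : ℕ) (hn : 0 < n) :
    ∑ π ∈ oddPartitions n, (π.parts.map (· ^ 2)).sum
      = ∑ k ∈ Finset.Icc 1 n, sigmaOdd 2 k * Qodd (n - k) := by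
  -- common expression
  have key : ∀ S : Finset (ℕ × ℕ), S = (Icc 1 n ×ˢ Icc 1 n).filter
      (fun p => Odd p.1 ∧ p.1 * p.2 ≤ n) → True := fun _ _ => trivial
  -- LHS
  have lhs_eq : ∑ π ∈ oddPartitions n, (π.parts.map (· ^ 2)).sum
      = ∑ d ∈ Icc 1 n, ∑ m ∈ Icc 1 n,
          (if Odd d ∧ d * m ≤ n then Qodd (n - d * m) else 0) * d ^ 2 := by
    have step1 : ∀ π ∈ oddPartitions n,
        (π.parts.map (· ^ 2)).sum = ∑ d ∈ Icc 1 n, π.parts.count d * d ^ 2 := by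
      intro π _
      rw [Finset.sum_multiset_map_count]
      refine Finset.sum_subset ?_ ?_
      · intro i hi
        rw [Multiset.mem_toFinset] at hi
        rw [Finset.mem_Icc]
        constructor
        · exact π.parts_pos hi
        · calc i ≤ π.parts.sum := Multiset.single_le_sum (fun x _ => Nat.zero_le x) i hi
            _ = n := π.parts_sum
      · intro i _ hi
        rw [Multiset.mem_toFinset] at hi
        simp [Multiset.count_eq_zero_of_notMem hi]
    rw [Finset.sum_congr rfl step1, Finset.sum_comm]
    refine Finset.sum_congr rfl fun d hd => ?_
    rw [Finset.mem_Icc] at hd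
    have step2 : ∀ π ∈ oddPartitions n,
        π.parts.count d * d ^ 2
          = ∑ m ∈ Icc 1 n, if m ≤ π.parts.count d then d ^ 2 else 0 := by
      intro π _
      have hc : π.parts.count d ≤ n := by
        have := count_mul_le n d π
        nlinarith [hd.1]
      rw [← Finset.sum_filter]
      have hfil : (Icc 1 n).filter (fun m => m ≤ π.parts.count d) = Icc 1 (π.parts.count d) := by
        ext m
        simp only [Finset.mem_filter, Finset.mem_Icc]
        omega
      rw [hfil, Finset.sum_const, Nat.card_Icc, smul_eq_mul]
      simp
    rw [Finset.sum_congr rfl step2, Finset.sum_comm]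
    refine Finset.sum_congr rfl fun m hm => ?_
    rw [Finset.mem_Icc] at hm
    rw [← Finset.sum_filter, Finset.sum_const, smul_eq_mul,
      card_filter_count' n d m hd.1 hm.1]
  have rhs_eq : ∑ k ∈ Finset.Icc 1 n, sigmaOdd 2 k * Qodd (n - k)
      = ∑ d ∈ Icc 1 n, ∑ m ∈ Icc 1 n,
          (if Odd d ∧ d * m ≤ n then Qodd (n - d * m) else 0) * d ^ 2 := by
    have h1 : ∀ k ∈ Icc 1 n, sigmaOdd 2 k * Qodd (n - k)
        = ∑ d ∈ k.divisors.filter Odd, Qodd (n - k) * d ^ 2 := by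
      intro k _
      rw [sigmaOdd, Finset.sum_mul]
      exact Finset.sum_congr rfl fun d _ => mul_comm _ _
    rw [Finset.sum_congr rfl h1, Finset.sum_sigma']
    have h2 : ∑ d ∈ Icc 1 n, ∑ m ∈ Icc 1 n,
          (if Odd d ∧ d * m ≤ n then Qodd (n - d * m) else 0) * d ^ 2
        = ∑ p ∈ (Icc 1 n ×ˢ Icc 1 n).filter (fun p => Odd p.1 ∧ p.1 * p.2 ≤ n),
            Qodd (n - p.1 * p.2) * p.1 ^ 2 := by
      rw [Finset.sum_filter, Finset.sum_product]
      refine Finset.sum_congr rfl fun d _ => Finset.sum_congr rfl fun m _ => ?_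
      split_ifs <;> simp
    rw [h2]
    refine Finset.sum_nbij' (i := fun x => (x.2, x.1 / x.2))
      (j := fun p => ⟨p.1 * p.2, p.1⟩) ?_ ?_ ?_ ?_ ?_
    · rintro ⟨k, d⟩ hx
      dsimp only at hx ⊢
      simp only [Finset.mem_sigma, Finset.mem_Icc, Finset.mem_filter, Nat.mem_divisors] at hx
      obtain ⟨⟨hk1, hkn⟩, ⟨hdvd, hk0⟩, hodd⟩ := hx
      have hd1 : 1 ≤ d := Nat.pos_of_dvd_of_pos hdvd (by omega)
      have hdk : d ≤ k := Nat.le_of_dvd (by omega) hdvd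
      have hq : d * (k / d) = k := Nat.mul_div_cancel' hdvd
      simp only [Finset.mem_filter, Finset.mem_product, Finset.mem_Icc]
      refine ⟨⟨⟨hd1, le_trans hdk hkn⟩, ?_, le_trans (Nat.div_le_self _ _) hkn⟩, hodd, ?_⟩
      · rw [Nat.one_le_div_iff (by omega)]; exact hdk
      · rw [hq]; exact hkn
    · rintro ⟨d, m⟩ hp
      dsimp only at hp ⊢
      simp only [Finset.mem_filter, Finset.mem_product, Finset.mem_Icc] at hp
      obtain ⟨⟨⟨hd1, _⟩, ⟨hm1, _⟩⟩, hodd, hdm⟩ := hp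
      rw [Finset.mem_sigma, Finset.mem_Icc, Finset.mem_filter, Nat.mem_divisors]
      exact ⟨⟨Nat.one_le_iff_ne_zero.mpr (by positivity), hdm⟩,
        ⟨Dvd.intro m rfl, by positivity⟩, hodd⟩
    · rintro ⟨k, d⟩ hx
      dsimp only at hx ⊢
      simp only [Finset.mem_sigma, Finset.mem_Icc, Finset.mem_filter, Nat.mem_divisors] at hx
      obtain ⟨⟨hk1, hkn⟩, ⟨hdvd, hk0⟩, hodd⟩ := hx
      show (⟨d * (k / d), d⟩ : Σ _ : ℕ, ℕ) = ⟨k, d⟩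
      rw [Nat.mul_div_cancel' hdvd]
    · rintro ⟨d, m⟩ hp
      dsimp only at hp ⊢
      simp only [Finset.mem_filter, Finset.mem_product, Finset.mem_Icc] at hp
      obtain ⟨⟨⟨hd1, _⟩, _⟩, _, _⟩ := hp
      show (d, d * m / d) = (d, m)
      rw [Nat.mul_div_cancel_left m (by omega)]
    · rintro ⟨k, d⟩ hx
      dsimp only at hx ⊢
      simp only [Finset.mem_sigma, Finset.mem_Icc, Finset.mem_filter, Nat.mem_divisors] at hx
      obtain ⟨⟨hk1, hkn⟩, ⟨hdvd, hk0⟩, hodd⟩ := hx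
      show Qodd (n - k) * d ^ 2 = Qodd (n - d * (k / d)) * d ^ 2
      rw [Nat.mul_div_cancel' hdvd]
  rw [lhs_eq, rhs_eq]

theorem e2Q_formula (n : ℕ) (hn : 0 < n) :
    (ejQ 2 n : ℚ) =
      (1 / 2) * ((n : ℚ) ^ 2 * (Qodd n : ℚ) -
        ∑ k ∈ Finset.Icc 1 n, (sigmaOdd 2 k : ℚ) * (Qodd (n - k) : ℚ)) := by
  have hnat : n ^ 2 * Qodd n
      = (∑ k ∈ Finset.Icc 1 n, sigmaOdd 2 k * Qodd (n - k)) + 2 * ejQ 2 n := by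
    have h1 : ∀ π ∈ oddPartitions n,
        n ^ 2 = (π.parts.map (· ^ 2)).sum + 2 * π.parts.esymm 2 := by
      intro π _
      have h := sq_sum_eq π.parts
      rwa [π.parts_sum] at h
    calc n ^ 2 * Qodd n = ∑ _π ∈ oddPartitions n, n ^ 2 := by
          rw [Finset.sum_const, smul_eq_mul, Qodd]; ring
      _ = ∑ π ∈ oddPartitions n, ((π.parts.map (· ^ 2)).sum + 2 * π.parts.esymm 2) :=
          Finset.sum_congr rfl h1
      _ = (∑ π ∈ oddPartitions n, (π.parts.map (· ^ 2)).sum) + 2 * ejQ 2 n := by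
          rw [Finset.sum_add_distrib, ejQ, Finset.mul_sum]
      _ = _ := by rw [sumsq_eq n hn]
  have hQ := congrArg (Nat.cast : ℕ → ℚ) hnat
  push_cast at hQ
  field_simp
  linarith
end

section
/- For every integer n > 0, e_3B(n) = (1/6) ( n^3 * B(n) - Σ_{k=1}^{n} ( 3n * σ_{2,bin}(k) - 2 * σ_{3,bin}(k) ) * B(n-k) ). -/
open Finset
open scoped Classical

/-- The finset of binary partitions of `n` (all parts are powers of `2`). -/
noncomputable def binaryPartitions (n : ℕ) : Finset (Nat.Partition n) :=
  Finset.univ.filter fun π => ∀ i ∈ π.parts, ∃ k : ℕ, i = 2 ^ k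

/-- `B(n)`, the number of binary partitions of `n`. -/
noncomputable def Bbin (n : ℕ) : ℕ := (binaryPartitions n).card

/-- `e_j B(n)`, the sum of the `j`-th elementary symmetric polynomial evaluated at the
parts over all binary partitions of `n`. -/
noncomputable def ejB (j n : ℕ) : ℕ := ∑ π ∈ binaryPartitions n, π.parts.esymm j

/-- `σ_{j,bin}(n) = Σ_{d ≥ 0, 2^d ∣ n} 2^{d·j}`. -/
def sigmaBin (j n : ℕ) : ℕ :=
  ∑ d ∈ (Finset.range (n + 1)).filter (fun d => 2 ^ d ∣ n), 2 ^ (d * j)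


lemma esymm_cons {R : Type*} [CommSemiring R] (a : R) (s : Multiset R) (k : ℕ) :
    (a ::ₘ s).esymm (k + 1) = s.esymm (k + 1) + a * s.esymm k := by
  simp only [Multiset.esymm, Multiset.powersetCard_cons, Multiset.map_add, Multiset.sum_add,
    Multiset.map_map, Function.comp_def, Multiset.prod_cons, ← Multiset.sum_map_mul_left]

lemma newton3 (s : Multiset ℚ) :
    s.esymm 1 = s.sum ∧
    2 * s.esymm 2 = s.sum ^ 2 - (s.map (· ^ 2)).sum ∧
    6 * s.esymm 3 = s.sum ^ 3 - 3 * s.sum * (s.map (· ^ 2)).sum + 2 * (s.map (· ^ 3)).sum := by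
  induction s using Multiset.induction with
  | empty => simp [Multiset.esymm, Multiset.powersetCard_eq_empty (s := (0 : Multiset ℚ)) 1 (by simp),
      Multiset.powersetCard_eq_empty (s := (0 : Multiset ℚ)) 2 (by simp),
      Multiset.powersetCard_eq_empty (s := (0 : Multiset ℚ)) 3 (by simp)]
  | cons a s ih =>
    obtain ⟨h1, h2, h3⟩ := ih
    have e1 := esymm_cons a s 0
    have e2 := esymm_cons a s 1
    have e3 := esymm_cons a s 2
    have e0 : s.esymm 0 = 1 := by simp [Multiset.esymm]
    norm_num [e0] at e1 e2 e3
    rw [e1, e2, e3, Multiset.map_cons, Multiset.map_cons, Multiset.sum_cons,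
      Multiset.sum_cons, Multiset.sum_cons]
    refine ⟨by linarith, by linear_combination h2 + 2 * a * h1, ?_⟩
    linear_combination h3 + 3 * a * h2

lemma esymm_cast (s : Multiset ℕ) (k : ℕ) :
    (s.map (Nat.cast : ℕ → ℚ)).esymm k = ((s.esymm k : ℕ) : ℚ) := by
  simp [Multiset.esymm, Multiset.powersetCard_map, Multiset.map_map, Function.comp_def,
    Nat.cast_multiset_sum, Nat.cast_multiset_prod]



lemma mem_binaryPartitions {n : ℕ} (π : Nat.Partition n) :
    π ∈ binaryPartitions n ↔ ∀ i ∈ π.parts, ∃ k : ℕ, i = 2 ^ k := by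
  simp [binaryPartitions]

/-- The key bijection: binary partitions of `n` with at least `k` parts equal to `2^d`
are in bijection with binary partitions of `n - k * 2^d`. -/
lemma card_filter_count_s8 (n d k : ℕ) (hk : 1 ≤ k) (hle : k * 2 ^ d ≤ n) :
    ((binaryPartitions n).filter (fun π => k ≤ π.parts.count (2 ^ d))).card
      = Bbin (n - k * 2 ^ d) := by
  classical
  set m := 2 ^ d with hm
  have hm0 : 0 < m := Nat.pow_pos (by norm_num)
  refine Finset.card_bij'
    (fun π hπ => (⟨π.parts - Multiset.replicate k m, ?_, ?_⟩ : Nat.Partition (n - k * m)))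
    (fun π' _ => (⟨π'.parts + Multiset.replicate k m, ?_, ?_⟩ : Nat.Partition n))
    ?_ ?_ ?_ ?_
  · intro i hi
    exact π.parts_pos (Multiset.mem_of_le (tsub_le_self) hi)
  · have hrep : Multiset.replicate k m ≤ π.parts := by
      rw [← Multiset.le_count_iff_replicate_le]
      exact (Finset.mem_filter.mp hπ).2
    have := tsub_add_cancel_of_le hrep
    have hsum : (π.parts - Multiset.replicate k m).sum + (Multiset.replicate k m).sum = n := by
      rw [← Multiset.sum_add, this, π.parts_sum]
    rw [Multiset.sum_replicate, smul_eq_mul] at hsum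
    omega
  · intro i hi
    rcases Multiset.mem_add.mp hi with h | h
    · exact π'.parts_pos h
    · rw [Multiset.eq_of_mem_replicate h]; exact hm0
  · rw [Multiset.sum_add, π'.parts_sum, Multiset.sum_replicate, smul_eq_mul]
    omega
  · intro π hπ
    rw [mem_binaryPartitions]
    intro i hi
    exact (mem_binaryPartitions π).mp (Finset.mem_filter.mp hπ).1 i
      (Multiset.mem_of_le (tsub_le_self) hi)
  · intro π' hπ'
    rw [Finset.mem_filter]
    constructor
    · rw [mem_binaryPartitions]
      intro i hi
      rcases Multiset.mem_add.mp hi with h | h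
      · exact (mem_binaryPartitions π').mp hπ' i h
      · exact ⟨d, Multiset.eq_of_mem_replicate h⟩
    · rw [Multiset.count_add, Multiset.count_replicate_self]
      omega
  · intro π hπ
    have hrep : Multiset.replicate k m ≤ π.parts := by
      rw [← Multiset.le_count_iff_replicate_le]
      exact (Finset.mem_filter.mp hπ).2
    ext1
    simp [tsub_add_cancel_of_le hrep]
  · intro π' hπ'
    ext1
    simp

-- (c) sum of counts over binary partitions
lemma sum_count_eq (n d : ℕ) :
    ∑ π ∈ binaryPartitions n, π.parts.count (2 ^ d)
      = ∑ k ∈ Icc 1 n, (if k * 2 ^ d ≤ n then Bbin (n - k * 2 ^ d) else 0) := by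
  classical
  have key : ∀ π ∈ binaryPartitions n, π.parts.count (2 ^ d)
      = ∑ k ∈ Icc 1 n, (if k ≤ π.parts.count (2 ^ d) then 1 else 0) := by
    intro π _
    have hc : π.parts.count (2 ^ d) ≤ n := by
      have hrep : Multiset.replicate (π.parts.count (2 ^ d)) (2 ^ d) ≤ π.parts :=
        Multiset.le_count_iff_replicate_le.mp le_rfl
      have h1 : (Multiset.replicate (π.parts.count (2 ^ d)) (2 ^ d)).sum ≤ π.parts.sum := by
        have := tsub_add_cancel_of_le hrep
        calc (Multiset.replicate (π.parts.count (2 ^ d)) (2 ^ d)).sum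
            ≤ (π.parts - Multiset.replicate (π.parts.count (2 ^ d)) (2 ^ d)).sum
              + (Multiset.replicate (π.parts.count (2 ^ d)) (2 ^ d)).sum := Nat.le_add_left _ _
          _ = π.parts.sum := by rw [← Multiset.sum_add, this]
      rw [Multiset.sum_replicate, smul_eq_mul, π.parts_sum] at h1
      have h2 : 1 ≤ 2 ^ d := Nat.one_le_two_pow
      calc π.parts.count (2 ^ d) ≤ π.parts.count (2 ^ d) * 2 ^ d := Nat.le_mul_of_pos_right _ h2
        _ ≤ n := h1
    rw [← Finset.sum_filter]
    simp only [Finset.sum_const, smul_eq_mul, mul_one]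
    rw [show (Icc 1 n).filter (fun k => k ≤ π.parts.count (2 ^ d)) = Icc 1 (π.parts.count (2 ^ d))
      by ext x; simp only [mem_filter, mem_Icc]; omega]
    rw [Nat.card_Icc]; omega
  rw [Finset.sum_congr rfl key, Finset.sum_comm]
  refine Finset.sum_congr rfl fun k hk => ?_
  by_cases h : k * 2 ^ d ≤ n
  · rw [if_pos h, ← card_filter_count_s8 n d k (Finset.mem_Icc.mp hk).1 h]
    rw [Finset.card_filter]
  · rw [← Finset.sum_filter, Finset.sum_const, smul_eq_mul, mul_one, if_neg h]
    convert Finset.card_empty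
    ext π
    simp only [Finset.mem_filter, Finset.notMem_empty, iff_false, not_and]
    intro hπ hcount
    exfalso
    -- k ≤ count, count * 2^d ≤ n gives k * 2^d ≤ n
    apply h
    have hrep : Multiset.replicate k (2 ^ d) ≤ π.parts :=
      Multiset.le_count_iff_replicate_le.mp hcount
    have h1 : (Multiset.replicate k (2 ^ d)).sum ≤ π.parts.sum := by
      have := tsub_add_cancel_of_le hrep
      calc (Multiset.replicate k (2 ^ d)).sum
          ≤ (π.parts - Multiset.replicate k (2 ^ d)).sum
            + (Multiset.replicate k (2 ^ d)).sum := Nat.le_add_left _ _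
        _ = π.parts.sum := by rw [← Multiset.sum_add, this]
    rwa [Multiset.sum_replicate, smul_eq_mul, π.parts_sum] at h1


-- (a) power sum of a binary partition as a sum over exponents
lemma psum_eq (n j : ℕ) (π : Nat.Partition n) (hπ : π ∈ binaryPartitions n) :
    (π.parts.map (· ^ j)).sum = ∑ d ∈ range (n + 1), 2 ^ (d * j) * π.parts.count (2 ^ d) := by
  classical
  rw [Finset.sum_multiset_map_count]
  have hparts_le : ∀ m ∈ π.parts, m ≤ n := by
    intro m hm
    have : m ::ₘ π.parts.erase m = π.parts := Multiset.cons_erase hm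
    have h2 : (m ::ₘ π.parts.erase m).sum = n := by rw [this, π.parts_sum]
    rw [Multiset.sum_cons] at h2
    omega
  rw [show ∑ d ∈ range (n + 1), 2 ^ (d * j) * π.parts.count (2 ^ d)
      = ∑ d ∈ (range (n + 1)).filter (fun d => 2 ^ d ∈ π.parts),
          2 ^ (d * j) * π.parts.count (2 ^ d) by
    rw [Finset.sum_filter_of_ne]
    intro d _ hne
    by_contra hmem
    exact hne (by rw [Multiset.count_eq_zero_of_notMem hmem, mul_zero])]
  refine Finset.sum_nbij' (fun m => Nat.log 2 m) (fun d => 2 ^ d) ?_ ?_ ?_ ?_ ?_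
  · intro m hm
    rw [Multiset.mem_toFinset] at hm
    obtain ⟨e, rfl⟩ := (mem_binaryPartitions π).mp hπ m hm
    simp only [Nat.log_pow Nat.one_lt_two]
    simp only [Finset.mem_filter, Finset.mem_range]
    refine ⟨?_, hm⟩
    have h1 : 2 ^ e ≤ n := hparts_le _ hm
    have h2 : e < 2 ^ e := Nat.lt_two_pow_self
    omega
  · intro d hd
    rw [Multiset.mem_toFinset]
    exact (Finset.mem_filter.mp hd).2
  · intro m hm
    rw [Multiset.mem_toFinset] at hm
    obtain ⟨e, rfl⟩ := (mem_binaryPartitions π).mp hπ m hm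
    simp only [Nat.log_pow Nat.one_lt_two]
  · intro d hd
    simp only [Nat.log_pow Nat.one_lt_two]
  · intro m hm
    rw [Multiset.mem_toFinset] at hm
    obtain ⟨e, rfl⟩ := (mem_binaryPartitions π).mp hπ m hm
    simp only [Nat.log_pow Nat.one_lt_two]
    rw [smul_eq_mul, ← pow_mul, mul_comm]

-- the full counting identity
lemma PjB_eq (j n : ℕ) :
    ∑ π ∈ binaryPartitions n, (π.parts.map (· ^ j)).sum
      = ∑ k ∈ Icc 1 n, sigmaBin j k * Bbin (n - k) := by
  classical
  rw [Finset.sum_congr rfl (fun π hπ => psum_eq n j π hπ), Finset.sum_comm]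
  simp_rw [← Finset.mul_sum]
  rw [Finset.sum_congr rfl (fun d _ => by rw [sum_count_eq n d])]
  -- now LHS = ∑ d ∈ range (n+1), 2^(d*j) * ∑ k ∈ Icc 1 n, ite ...
  simp_rw [Finset.mul_sum, mul_ite, mul_zero, ← Finset.sum_filter]
  -- reindex
  simp_rw [sigmaBin, Finset.sum_mul]
  rw [Finset.sum_sigma', Finset.sum_sigma']
  refine Finset.sum_nbij' (fun p => ⟨p.2 * 2 ^ p.1, p.1⟩) (fun q => ⟨q.2, q.1 / 2 ^ q.2⟩)
    ?_ ?_ ?_ ?_ ?_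
  · rintro ⟨d, k⟩ hp
    simp only [Finset.mem_sigma, Finset.mem_filter, Finset.mem_range, Finset.mem_Icc] at hp ⊢
    obtain ⟨hd, ⟨hk1, hk2⟩, hkd⟩ := hp
    have h2 : 1 ≤ 2 ^ d := Nat.one_le_two_pow
    have hd2 : d < 2 ^ d := Nat.lt_two_pow_self
    refine ⟨⟨by nlinarith, hkd⟩, ⟨by nlinarith, dvd_mul_left (2 ^ d) k⟩⟩
  · rintro ⟨K, d⟩ hq
    simp only [Finset.mem_sigma, Finset.mem_filter, Finset.mem_range, Finset.mem_Icc] at hq ⊢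
    obtain ⟨⟨hK1, hK2⟩, hd, hdvd⟩ := hq
    have hmul : K / 2 ^ d * 2 ^ d = K := Nat.div_mul_cancel hdvd
    have hdivle : K / 2 ^ d ≤ K := Nat.div_le_self _ _
    have hpos : 1 ≤ K / 2 ^ d := by
      rcases Nat.eq_zero_or_pos (K / 2 ^ d) with h | h
      · rw [h] at hmul; omega
      · exact h
    exact ⟨by omega, ⟨hpos, by omega⟩, by rw [hmul]; omega⟩
  · rintro ⟨d, k⟩ hp
    have h2 : 0 < 2 ^ d := Nat.pow_pos (by norm_num)
    simp [Nat.mul_div_cancel _ h2]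
  · rintro ⟨K, d⟩ hq
    simp only [Finset.mem_sigma, Finset.mem_filter] at hq
    have hmul : K / 2 ^ d * 2 ^ d = K := Nat.div_mul_cancel hq.2.2
    simp [hmul]
  · rintro ⟨d, k⟩ hp
    rfl

theorem e3B_formula (n : ℕ) (hn : 0 < n) :
    (ejB 3 n : ℚ) =
      (1 / 6) * ((n : ℚ) ^ 3 * (Bbin n : ℚ) -
        ∑ k ∈ Finset.Icc 1 n,
          (3 * (n : ℚ) * (sigmaBin 2 k : ℚ) - 2 * (sigmaBin 3 k : ℚ)) * (Bbin (n - k) : ℚ)) := by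
  classical
  have perpart : ∀ π ∈ binaryPartitions n,
      ((π.parts.esymm 3 : ℕ) : ℚ)
        = 1 / 6 * ((n : ℚ) ^ 3 - 3 * (n : ℚ) * (((π.parts.map (fun x : ℕ => x ^ 2)).sum : ℕ) : ℚ)
            + 2 * (((π.parts.map (fun x : ℕ => x ^ 3)).sum : ℕ) : ℚ)) := by
    intro π _
    obtain ⟨-, -, h3⟩ := newton3 (π.parts.map (Nat.cast : ℕ → ℚ))
    rw [esymm_cast] at h3
    have hsum : (π.parts.map (Nat.cast : ℕ → ℚ)).sum = (n : ℚ) := by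
      rw [← Nat.cast_multiset_sum, π.parts_sum]
    have hsq : ((π.parts.map (Nat.cast : ℕ → ℚ)).map (· ^ 2)).sum
        = (((π.parts.map (fun x : ℕ => x ^ 2)).sum : ℕ) : ℚ) := by
      rw [Nat.cast_multiset_sum, Multiset.map_map, Multiset.map_map]
      exact congrArg Multiset.sum (Multiset.map_congr rfl fun x _ => by simp)
    have hcu : ((π.parts.map (Nat.cast : ℕ → ℚ)).map (· ^ 3)).sum
        = (((π.parts.map (fun x : ℕ => x ^ 3)).sum : ℕ) : ℚ) := by
      rw [Nat.cast_multiset_sum, Multiset.map_map, Multiset.map_map]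
      exact congrArg Multiset.sum (Multiset.map_congr rfl fun x _ => by simp)
    rw [hsum, hsq, hcu] at h3
    linarith
  have hq2 : ∑ π ∈ binaryPartitions n, (((π.parts.map (· ^ 2)).sum : ℕ) : ℚ)
      = ∑ k ∈ Icc 1 n, (sigmaBin 2 k : ℚ) * (Bbin (n - k) : ℚ) := by
    exact_mod_cast PjB_eq 2 n
  have hq3 : ∑ π ∈ binaryPartitions n, (((π.parts.map (· ^ 3)).sum : ℕ) : ℚ)
      = ∑ k ∈ Icc 1 n, (sigmaBin 3 k : ℚ) * (Bbin (n - k) : ℚ) := by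
    exact_mod_cast PjB_eq 3 n
  have hEL : (ejB 3 n : ℚ) = ∑ π ∈ binaryPartitions n, ((π.parts.esymm 3 : ℕ) : ℚ) := by
    rw [ejB]; push_cast; rfl
  rw [hEL, Finset.sum_congr rfl perpart]
  have hrhs : ∑ k ∈ Finset.Icc 1 n,
      (3 * (n : ℚ) * (sigmaBin 2 k : ℚ) - 2 * (sigmaBin 3 k : ℚ)) * (Bbin (n - k) : ℚ)
      = 3 * (n : ℚ) * (∑ k ∈ Icc 1 n, (sigmaBin 2 k : ℚ) * (Bbin (n - k) : ℚ))
        - 2 * (∑ k ∈ Icc 1 n, (sigmaBin 3 k : ℚ) * (Bbin (n - k) : ℚ)) := by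
    rw [Finset.mul_sum, Finset.mul_sum, ← Finset.sum_sub_distrib]
    exact Finset.sum_congr rfl fun k _ => by ring
  rw [hrhs, ← hq2, ← hq3]
  rw [← Finset.mul_sum, Finset.sum_add_distrib, Finset.sum_sub_distrib, Finset.sum_const,
    nsmul_eq_mul, ← Finset.mul_sum, ← Finset.mul_sum, Bbin]
  ring
end
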